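/- The flow of the vector field X⁷ is explicit: let p = (p₁, p₂, p₃) ∈ ℂ³ and set D(t) := p₂·sinh(t) + i·cosh(t). Define γ by γ(t) = ( i p₁ / D(t), (i p₂ cosh(t) − sinh(t)) / D(t), p₃ + p₁²·sinh(t)/D(t) ). Then γ(0) = p, and at every t ∈ ℝ with D(t) ≠ 0 the curve γ is differentiable with γ′(t) = X⁷(γ(t)). -/

import Mathlib

open Complex

noncomputable section

lemma X7aux1 (a b s c : ℂ) (hd : b * s + I * c ≠ 0) :
    I * (I * a / (b * s + I * c)) * ((I * b * c - s) / (b * s + I * c)) =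
      (0 * (b * s + I * c) - I * a * (b * c + I * s)) / (b * s + I * c) ^ 2 := by
  field_simp
  linear_combination (I * a * b * c) * I_sq

lemma X7aux2 (b s c : ℂ) (hd : b * s + I * c ≠ 0) :
    I * ((I * b * c - s) / (b * s + I * c)) ^ 2 + I =
      ((I * b * s - c) * (b * s + I * c) - (I * b * c - s) * (b * c + I * s)) /
        (b * s + I * c) ^ 2 := by
  field_simp
  linear_combination (I * c ^ 2 * (1 + b ^ 2)) * I_sq

lemma X7aux3 (a b s c : ℂ) (h : c ^ 2 - s ^ 2 = 1) (hd : b * s + I * c ≠ 0) :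
    -I * (I * a / (b * s + I * c)) ^ 2 =
      0 + (a ^ 2 * c * (b * s + I * c) - a ^ 2 * s * (b * c + I * s)) / (b * s + I * c) ^ 2 := by
  rw [zero_add]
  field_simp
  linear_combination (-I * a ^ 2) * I_sq + (-I * a ^ 2) * h

/-- The holomorphic vector field `X⁷ = (i z₁ z₂, i z₂² + i, −i z₁²)` on `ℂ³`. -/
def X7 : ℂ × ℂ × ℂ → ℂ × ℂ × ℂ := fun p => (I * p.1 * p.2.1, I * p.2.1 ^ 2 + I, -I * p.1 ^ 2)

/-- The explicit flow of `X⁷`: for `p ∈ ℂ³`, setting `D(t) = p₂ sinh t + i cosh t`, the curve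
`γ(t) = (i p₁/D(t), (i p₂ cosh t − sinh t)/D(t), p₃ + p₁² sinh t / D(t))`
starts at `p` and is an integral curve of `X⁷` wherever `D(t) ≠ 0`. -/
theorem X7_flow (p : ℂ × ℂ × ℂ) (D : ℝ → ℂ)
    (hD : D = fun t : ℝ => p.2.1 * (Real.sinh t : ℂ) + I * (Real.cosh t : ℂ))
    (γ : ℝ → ℂ × ℂ × ℂ)
    (hγ : γ = fun t : ℝ =>
      (I * p.1 / D t,
        (I * p.2.1 * (Real.cosh t : ℂ) - (Real.sinh t : ℂ)) / D t,
        p.2.2 + p.1 ^ 2 * (Real.sinh t : ℂ) / D t)) :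
    γ 0 = p ∧ ∀ t : ℝ, D t ≠ 0 → HasDerivAt γ (X7 (γ t)) t := by
  have hs : ∀ t : ℝ, HasDerivAt (fun t : ℝ => (Real.sinh t : ℂ)) (Real.cosh t : ℂ) t :=
    fun t => (Real.hasDerivAt_sinh t).ofReal_comp
  have hc : ∀ t : ℝ, HasDerivAt (fun t : ℝ => (Real.cosh t : ℂ)) (Real.sinh t : ℂ) t :=
    fun t => (Real.hasDerivAt_cosh t).ofReal_comp
  constructor
  · rw [hγ, hD]
    simp only [Real.sinh_zero, Real.cosh_zero, Complex.ofReal_zero, Complex.ofReal_one,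
      mul_zero, mul_one, zero_add, sub_zero, zero_div, add_zero]
    have hI : I ≠ 0 := I_ne_zero
    rw [mul_comm I p.1, mul_div_assoc, div_self hI, mul_one,
      mul_comm I p.2.1, mul_div_assoc, div_self hI, mul_one]
  · intro t ht
    set s : ℂ := (Real.sinh t : ℂ) with hsdef
    set c : ℂ := (Real.cosh t : ℂ) with hcdef
    have hsc : c ^ 2 - s ^ 2 = 1 := by
      rw [hsdef, hcdef]
      have h := Real.cosh_sq_sub_sinh_sq t
      exact_mod_cast congrArg (fun x : ℝ => (x : ℂ)) h
    have ht' : p.2.1 * s + I * c ≠ 0 := by rw [hD] at ht; exact ht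
    have hD' : HasDerivAt D (p.2.1 * c + I * s) t := by
      rw [hD]; exact ((hs t).const_mul _).add ((hc t).const_mul _)
    have h1 : HasDerivAt (fun t : ℝ => I * p.1 / D t)
        (I * (I * p.1 / D t) * ((I * p.2.1 * c - s) / D t)) t := by
      have h := (hasDerivAt_const t (I * p.1)).div hD' ht
      refine h.congr_deriv (Eq.symm ?_)
      rw [hD]
      exact X7aux1 p.1 p.2.1 s c ht'
    have h2 : HasDerivAt (fun t : ℝ => (I * p.2.1 * (Real.cosh t : ℂ) - (Real.sinh t : ℂ)) / D t)
        (I * ((I * p.2.1 * c - s) / D t) ^ 2 + I) t := by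
      have hnum : HasDerivAt (fun t : ℝ => I * p.2.1 * (Real.cosh t : ℂ) - (Real.sinh t : ℂ))
          (I * p.2.1 * s - c) t := ((hc t).const_mul _).sub (hs t)
      have h := hnum.div hD' ht
      refine h.congr_deriv (Eq.symm ?_)
      rw [hD]
      exact X7aux2 p.2.1 s c ht'
    have h3 : HasDerivAt (fun t : ℝ => p.2.2 + p.1 ^ 2 * (Real.sinh t : ℂ) / D t)
        (-I * (I * p.1 / D t) ^ 2) t := by
      have hnum : HasDerivAt (fun t : ℝ => p.1 ^ 2 * (Real.sinh t : ℂ)) (p.1 ^ 2 * c) t :=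
        (hs t).const_mul _
      have h := (hasDerivAt_const t p.2.2).add (hnum.div hD' ht)
      refine h.congr_deriv (Eq.symm ?_)
      rw [hD]
      exact X7aux3 p.1 p.2.1 s c hsc ht'
    have hprod := h1.prodMk (h2.prodMk h3)
    have hval : X7 (γ t) =
        (I * (I * p.1 / D t) * ((I * p.2.1 * c - s) / D t),
          I * ((I * p.2.1 * c - s) / D t) ^ 2 + I,
          -I * (I * p.1 / D t) ^ 2) := by
      rw [hγ]; rfl
    rw [hval, hγ]
    exact hprod
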